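/- The infinite queue specification and the finite Bergstra–Klop queue specification define the same behaviour up to divergence-preserving branching bisimilarity: T_{E∞Q}(Q_ε) ≈Δb T_{EQ}(Q^{io}_l). -/

import Mathlib

namespace RTMPaper

/-! ## Labelled transition systems

An `A`-labelled transition system; transition labels are drawn from `Option A`,
where `none` plays the role of the unobservable action τ. -/

structure LTS (A : Type) where
  State : Type
  tr : State → Option A → State → Prop
  init : State
  final : Set State

namespace LTS

variable {A : Type}

/-- A τ-step. -/
def tauStep (T : LTS A) (s t : T.State) : Prop := T.tr s none t

/-- `⇒` : the reflexive–transitive closure of τ-steps. -/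
def tauReach (T : LTS A) : T.State → T.State → Prop :=
  Relation.ReflTransGen T.tauStep

/-- `s —(a)→ t` : either `s —a→ t`, or `a = τ` and `s = t`. -/
def optStep (T : LTS A) (s : T.State) (a : Option A) (t : T.State) : Prop :=
  T.tr s a t ∨ (a = none ∧ s = t)

/-- The set of outgoing transitions of a state. -/
def out (T : LTS A) (s : T.State) : Set (Option A × T.State) :=
  {p | T.tr s p.1 p.2}

def FinitelyBranching (T : LTS A) : Prop := ∀ s, (T.out s).Finite

/-- The branching degree of `T` is bounded by `B`. -/
def BranchingDegreeBoundedBy (T : LTS A) (B : ℕ) : Prop :=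
  ∀ s, (T.out s).Finite ∧ (T.out s).ncard ≤ B

def BoundedlyBranching (T : LTS A) : Prop := ∃ B, T.BranchingDegreeBoundedBy B

/-- A deterministic transition system. -/
def Deterministic (T : LTS A) : Prop :=
  (∀ s a t₁ t₂, T.tr s a t₁ → T.tr s a t₂ → t₁ = t₂) ∧
  (∀ s t, T.tr s none t → ∀ a u, T.tr s a u → a = none)

/-- Relabelling of an LTS along a map of action alphabets (τ is mapped to τ). -/
def relabel {A' : Type} (f : A → A') (T : LTS A) : LTS A' where
  State := T.State
  tr s a t := ∃ a₀ : Option A, T.tr s a₀ t ∧ a = Option.map f a₀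
  init := T.init
  final := T.final

end LTS

/-! ## (Divergence-preserving) branching bisimilarity -/

structure IsBranchingBisimulation {A : Type} (T₁ T₂ : LTS A)
    (R : T₁.State → T₂.State → Prop) : Prop where
  fwd : ∀ s₁ s₂ a s₁', R s₁ s₂ → T₁.tr s₁ a s₁' →
    ∃ s₂'' s₂', T₂.tauReach s₂ s₂'' ∧ T₂.optStep s₂'' a s₂' ∧ R s₁ s₂'' ∧ R s₁' s₂'
  bwd : ∀ s₁ s₂ a s₂', R s₁ s₂ → T₂.tr s₂ a s₂' →
    ∃ s₁'' s₁', T₁.tauReach s₁ s₁'' ∧ T₁.optStep s₁'' a s₁' ∧ R s₁'' s₂ ∧ R s₁' s₂'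
  finFwd : ∀ s₁ s₂, R s₁ s₂ → s₁ ∈ T₁.final →
    ∃ s₂', T₂.tauReach s₂ s₂' ∧ R s₁ s₂' ∧ s₂' ∈ T₂.final
  finBwd : ∀ s₁ s₂, R s₁ s₂ → s₂ ∈ T₂.final →
    ∃ s₁', T₁.tauReach s₁ s₁' ∧ R s₁' s₂ ∧ s₁' ∈ T₁.final

/-- The divergence-preservation conditions on a branching bisimulation. -/
def DivergencePreserving {A : Type} (T₁ T₂ : LTS A)
    (R : T₁.State → T₂.State → Prop) : Prop :=
  (∀ (s₂ : T₂.State) (f : ℕ → T₁.State),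
      (∀ i, T₁.tauStep (f i) (f (i + 1))) → (∀ i, R (f i) s₂) →
      ∃ s₂', Relation.TransGen T₂.tauStep s₂ s₂' ∧ ∃ i, R (f i) s₂') ∧
  (∀ (s₁ : T₁.State) (f : ℕ → T₂.State),
      (∀ i, T₂.tauStep (f i) (f (i + 1))) → (∀ i, R s₁ (f i)) →
      ∃ s₁', Relation.TransGen T₁.tauStep s₁ s₁' ∧ ∃ i, R s₁' (f i))

/-- `T₁ ≈b T₂` : branching bisimilarity. -/
def BranchingBisimilar {A : Type} (T₁ T₂ : LTS A) : Prop :=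
  ∃ R, IsBranchingBisimulation T₁ T₂ R ∧ R T₁.init T₂.init

/-- `T₁ ≈Δb T₂` : divergence-preserving branching bisimilarity. -/
def DPBranchingBisimilar {A : Type} (T₁ T₂ : LTS A) : Prop :=
  ∃ R, IsBranchingBisimulation T₁ T₂ R ∧ DivergencePreserving T₁ T₂ R ∧
    R T₁.init T₂.init

/-! ## Effective and computable transition systems -/

/-- A set of natural numbers is recursively enumerable. -/
def REset (X : Set ℕ) : Prop :=
  ∃ f : ℕ →. Unit, Partrec f ∧ ∀ n, (f n).Dom ↔ n ∈ X

/-- A (finitely branching) LTS is computable if, with respect to some injective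
codings of its labels and states into ℕ, the functions `out` and `fin` are
recursive. -/
def LTS.IsComputable {A : Type} (T : LTS A) : Prop :=
  ∃ hfb : ∀ s, (T.out s).Finite,
    ∃ (cL : Option A → ℕ) (cS : T.State → ℕ),
      Function.Injective cL ∧ Function.Injective cS ∧
      (∃ fo : ℕ → ℕ, Computable fo ∧ ∀ s,
        fo (cS s) =
          Encodable.encode
            (((hfb s).toFinset).image fun p => Nat.pair (cL p.1) (cS p.2))) ∧
      (∃ ff : ℕ → ℕ, Computable ff ∧ ∀ s,
        (s ∈ T.final → ff (cS s) = 1) ∧ (s ∉ T.final → ff (cS s) = 0))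

/-- A (finitely branching) LTS is effective if, with respect to some injective
codings of its labels and states into ℕ, its transition relation and its set of
final states are recursively enumerable. -/
def LTS.IsEffective {A : Type} (T : LTS A) : Prop :=
  T.FinitelyBranching ∧
  ∃ (cL : Option A → ℕ) (cS : T.State → ℕ),
    Function.Injective cL ∧ Function.Injective cS ∧
    REset {n | ∃ s a t, T.tr s a t ∧ n = Nat.pair (cS s) (Nat.pair (cL a) (cS t))} ∧
    REset {n | ∃ s ∈ T.final, n = cS s}

/-! ## Reactive Turing machines -/

inductive Move : Type
  | L | R
deriving DecidableEq

instance instFintypeMove : Fintype Move where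
  elems := {Move.L, Move.R}
  complete := by intro x; cases x <;> simp

/-- A tape instance: the content left of the head (nearest symbol first), the
symbol under the head, and the content right of the head (nearest symbol
first).  Tape symbols are `Option D`, with `none` the blank symbol □. -/
structure Tape (D : Type) where
  left : List (Option D)
  head : Option D
  right : List (Option D)

def Tape.empty (D : Type) : Tape D := ⟨[], none, []⟩

/-- Write `e` at the head position and move the head in direction `m`. -/
def Tape.writeMove {D : Type} (t : Tape D) (e : Option D) : Move → Tape D
  | .L =>
    match t.left with
    | [] => ⟨[], none, e :: t.right⟩
    | x :: l => ⟨l, x, e :: t.right⟩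
  | .R =>
    match t.right with
    | [] => ⟨e :: t.left, none, []⟩
    | x :: r => ⟨e :: t.left, x, r⟩

/-- A reactive Turing machine with action symbols `A` (labels `Option A`,
`none` being τ) and data symbols `D` (tape symbols `Option D`, `none` being
the blank symbol). -/
structure RTM (A D : Type) where
  Q : Type
  [instQ : Fintype Q]
  trans : Q → Option D → Option A → Option D → Move → Q → Prop
  init : Q
  final : Set Q

attribute [instance] RTM.instQ

/-- The transition system `T(M)` associated with an RTM `M`. -/
def RTM.lts {A D : Type} (M : RTM A D) : LTS A where
  State := M.Q × Tape D
  tr c a c' := ∃ e m, M.trans c.1 c.2.head a e m c'.1 ∧ c'.2 = c.2.writeMove e m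
  init := (M.init, Tape.empty D)
  final := {c | c.1 ∈ M.final}

def RTM.Deterministic {A D : Type} (M : RTM A D) : Prop :=
  (∀ s d a e₁ m₁ t₁ e₂ m₂ t₂, M.trans s d a e₁ m₁ t₁ → M.trans s d a e₂ m₂ t₂ →
      e₁ = e₂ ∧ m₁ = m₂ ∧ t₁ = t₂) ∧
  (∀ s d e₁ m₁ t₁, M.trans s d none e₁ m₁ t₁ →
      ∀ a e₂ m₂ t₂, M.trans s d a e₂ m₂ t₂ → a = none)

/-! ## Actions over channels, and parallel composition -/

/-- Actions over a set `C` of channels with communicated values in `V`,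
together with further (base) actions from `B`:  `recv c v` is `c?v`,
`send c v` is `c!v`. -/
inductive CAct (C V B : Type) : Type
  | recv : C → V → CAct C V B
  | send : C → V → CAct C V B
  | base : B → CAct C V B
deriving DecidableEq

/-- The (possibly silent) action `a` is a communication action on one of the
channels in `C'`. -/
def IsComm {C V B : Type} (C' : Set C) : Option (CAct C V B) → Prop
  | some (.recv c _) => c ∈ C'
  | some (.send c _) => c ∈ C'
  | _ => False

/-- Parallel composition `[T₁ ∥ T₂]_{C'}` of transition systems, enforcing
communication on the channels in `C'`. -/
def parLTS {C V B : Type} (C' : Set C) (T₁ T₂ : LTS (CAct C V B)) :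
    LTS (CAct C V B) where
  State := T₁.State × T₂.State
  init := (T₁.init, T₂.init)
  final := {p | p.1 ∈ T₁.final ∧ p.2 ∈ T₂.final}
  tr p a p' :=
    ¬ IsComm C' a ∧
    ((T₁.tr p.1 a p'.1 ∧ p.2 = p'.2) ∨
     (T₂.tr p.2 a p'.2 ∧ p.1 = p'.1) ∨
     (a = none ∧ ∃ c ∈ C', ∃ d : V,
        (T₁.tr p.1 (some (.send c d)) p'.1 ∧ T₂.tr p.2 (some (.recv c d)) p'.2) ∨
        (T₁.tr p.1 (some (.recv c d)) p'.1 ∧ T₂.tr p.2 (some (.send c d)) p'.2)))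

/-- The behaviour of `sender(M)`: output the symbols of `w` one by one along
channel `cu`, then halt in a final state. -/
def outputLTS {C V B : Type} (cu : C) (w : List V) : LTS (CAct C V B) where
  State := List V
  tr s a t := ∃ d, s = d :: t ∧ a = some (.send cu d)
  init := w
  final := {([] : List V)}

/-- A concrete (syntactic, Gödel-numberable) presentation of a reactive Turing
machine: states are `Fin (n+1)`, and the transition relation is a finite set of
tuples. -/
structure RTMc (A D : Type) where
  n : ℕ
  trans : Finset (Fin (n + 1) × Option D × Option A × Option D × Move × Fin (n + 1))
  init : Fin (n + 1)
  final : Finset (Fin (n + 1))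

def RTMc.toRTM {A D : Type} (M : RTMc A D) : RTM A D where
  Q := Fin (M.n + 1)
  trans s d a e m t := (s, d, a, e, m, t) ∈ M.trans
  init := M.init
  final := (↑M.final : Set (Fin (M.n + 1)))

end RTMPaper

namespace RTMPaper

/-! ## A process calculus (TCP_τ without sequential composition) -/

/-- Process expressions: deadlock `0`, skip `1`, action prefix, alternative
composition, parallel composition (enforcing communication on a set of
channels), and names. -/
inductive PExp (C V B N : Type) : Type
  | dl : PExp C V B N
  | emp : PExp C V B N
  | pref : Option (CAct C V B) → PExp C V B N → PExp C V B N
  | alt : PExp C V B N → PExp C V B N → PExp C V B N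
  | par : Set C → PExp C V B N → PExp C V B N → PExp C V B N
  | name : N → PExp C V B N

namespace PExp

def names {C V B N : Type} : PExp C V B N → Set N
  | .dl => ∅
  | .emp => ∅
  | .pref _ p => p.names
  | .alt p q => p.names ∪ q.names
  | .par _ p q => p.names ∪ q.names
  | .name n => {n}

def mapNames {C V B N N' : Type} (f : N → N') : PExp C V B N → PExp C V B N'
  | .dl => .dl
  | .emp => .emp
  | .pref a p => .pref a (p.mapNames f)
  | .alt p q => .alt (p.mapNames f) (q.mapNames f)
  | .par C' p q => .par C' (p.mapNames f) (q.mapNames f)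
  | .name n => .name (f n)

end PExp

/-- A recursive specification over the names `N` is a partial map from names to
process expressions (the defining equations). -/
def SpecWF {C V B N : Type} (E : N → Option (PExp C V B N)) : Prop :=
  ∀ n p, E n = some p → ∀ m ∈ PExp.names p, (E m).isSome

/-- All names occurring in `p` have a defining equation in `E`. -/
def DefinedIn {C V B N : Type} (E : N → Option (PExp C V B N))
    (p : PExp C V B N) : Prop :=
  ∀ m ∈ PExp.names p, (E m).isSome

/-- The termination predicate `↓` of the structural operational semantics. -/
inductive Term {C V B N : Type} (E : N → Option (PExp C V B N)) :
    PExp C V B N → Prop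
  | emp : Term E .emp
  | altL {p q} : Term E p → Term E (.alt p q)
  | altR {p q} : Term E q → Term E (.alt p q)
  | par {C' p q} : Term E p → Term E q → Term E (.par C' p q)
  | name {n p} : E n = some p → Term E p → Term E (.name n)

/-- The transition relation of the structural operational semantics. -/
inductive Step {C V B N : Type} (E : N → Option (PExp C V B N)) :
    PExp C V B N → Option (CAct C V B) → PExp C V B N → Prop
  | pref {a p} : Step E (.pref a p) a p
  | altL {p q a p'} : Step E p a p' → Step E (.alt p q) a p'
  | altR {p q a q'} : Step E q a q' → Step E (.alt p q) a q'
  | parL {C' p q a p'} : Step E p a p' → ¬ IsComm C' a →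
      Step E (.par C' p q) a (.par C' p' q)
  | parR {C' p q a q'} : Step E q a q' → ¬ IsComm C' a →
      Step E (.par C' p q) a (.par C' p q')
  | syncSR {C' : Set C} {p q p' q' c d} : c ∈ C' →
      Step E p (some (.send c d)) p' → Step E q (some (.recv c d)) q' →
      Step E (.par C' p q) none (.par C' p' q')
  | syncRS {C' : Set C} {p q p' q' c d} : c ∈ C' →
      Step E p (some (.recv c d)) p' → Step E q (some (.send c d)) q' →
      Step E (.par C' p q) none (.par C' p' q')
  | name {n p a p'} : E n = some p → Step E p a p' → Step E (.name n) a p'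

/-- The process expressions reachable from `p` under the semantics of `E`. -/
def Reach {C V B N : Type} (E : N → Option (PExp C V B N))
    (p : PExp C V B N) : Set (PExp C V B N) :=
  {q | Relation.ReflTransGen (fun x y => ∃ a, Step E x a y) p q}

/-- The transition system `T_E(p)` associated with the process expression `p`
and the recursive specification `E`. -/
def pLTS {C V B N : Type} (E : N → Option (PExp C V B N))
    (p : PExp C V B N) : LTS (CAct C V B) where
  State := {q // q ∈ Reach E p}
  tr s a t := Step E s.1 a t.1
  init := ⟨p, Relation.ReflTransGen.refl⟩
  final := {s | Term E s.1}

/-- A deterministic internal computation from `s` to `s'` with respect to a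
transition relation `tr`. -/
def DetInternalComp {S A : Type} (tr : S → Option A → S → Prop)
    (s s' : S) : Prop :=
  ∃ (n : ℕ) (f : ℕ → S), f 0 = s ∧ f n = s' ∧
    (∀ i < n, tr (f i) none (f (i + 1))) ∧
    (∀ i < n, ∀ a u, tr (f i) a u → a = none ∧ u = f (i + 1))

/-! ### Finite sums of process expressions -/

def bigAlt {C V B N : Type} (l : List (PExp C V B N)) : PExp C V B N :=
  l.foldr PExp.alt PExp.dl

/-- `Σ_{x ∈ l} f x`. -/
def sumList {C V B N ι : Type} (l : List ι) (f : ι → PExp C V B N) :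
    PExp C V B N :=
  bigAlt (l.map f)

/-- The list of all elements of a finite type. -/
noncomputable def allOf (ι : Type) [Fintype ι] : List ι := Finset.univ.toList

/-- The disjoint union of two recursive specifications. -/
def combineSpec {C V B N₁ N₂ : Type}
    (E₁ : N₁ → Option (PExp C V B N₁)) (E₂ : N₂ → Option (PExp C V B N₂)) :
    N₁ ⊕ N₂ → Option (PExp C V B (N₁ ⊕ N₂))
  | .inl n => (E₁ n).map (PExp.mapNames Sum.inl)
  | .inr n => (E₂ n).map (PExp.mapNames Sum.inr)

/-! ### Queue specifications -/

/-- The infinite specification `E∞Q` of a FIFO queue over the alphabet `al`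
with input channel `ci` and output channel `co`; the name of a state of the
queue is its contents (a string, insertion at the left, removal at the
right). -/
def infQueueSpec (C B V : Type) (al : List V) (ci co : C) :
    List V → Option (PExp C V B (List V)) := fun l =>
  some <|
    match l.getLast? with
    | none =>
        .alt (sumList al fun d => .pref (some (.recv ci d)) (.name [d])) .emp
    | some d =>
        .alt (.alt (.pref (some (.send co d)) (.name l.dropLast))
          (sumList al fun e => .pref (some (.recv ci e)) (.name (e :: l)))) .emp

/-- The finite Bergstra–Klop queue specification `EQ` (with added `1`-summands):
for channels `(j,k,p)`,
`Q^{jk}_p ≝ Σ_d j?d.[ Q^{jp}_k ∥ (1 + k!d.Q^{pk}_j) ]_{{p}} + 1`. -/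
def bkQueueSpec (C B V : Type) (al : List V) :
    C × C × C → Option (PExp C V B (C × C × C)) := fun jkp =>
  some <| .alt
    (sumList al fun d => .pref (some (.recv jkp.1 d))
      (.par {jkp.2.2} (.name (jkp.1, jkp.2.2, jkp.2.1))
        (.alt .emp (.pref (some (.send jkp.2.1 d)) (.name (jkp.2.2, jkp.2.1, jkp.1))))))
    .emp

/-! ### Tape specifications -/

/-- Symbols communicated in the tape/queue specifications: tape symbols
(`dat d` for `d ∈ D□`), the fresh symbols `⊥` and `$`, and the move
instructions `L` and `R`. -/
inductive Sym (D : Type) : Type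
  | dat : Option D → Sym D
  | bot : Sym D
  | dollar : Sym D
  | mvL : Sym D
  | mvR : Sym D
deriving DecidableEq

instance {D : Type} [Fintype D] [DecidableEq D] : Fintype (Sym D) where
  elems := ((Finset.univ : Finset (Option D)).image Sym.dat) ∪
    {Sym.bot, Sym.dollar, Sym.mvL, Sym.mvR}
  complete := by intro x; cases x <;> simp

/-- The queue alphabet `D□ ∪ {⊥, $}`. -/
noncomputable def qAlphList (D : Type) [Fintype D] [DecidableEq D] : List (Sym D) :=
  ((Finset.univ : Finset (Sym D)).filter fun v => v ≠ Sym.mvL ∧ v ≠ Sym.mvR).toList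

def dmap {D : Type} (l : List (Option D)) : List (Sym D) := l.map Sym.dat

def movSym {D : Type} : Move → Sym D
  | .L => .mvL
  | .R => .mvR

/-- Names of the finite tape-controller specification `ET`. -/
inductive TName (D : Type) : Type
  | H : Option D → TName D
  | HL : Option D → TName D
  | HR : Option D → TName D
  | Back : TName D
  | Fwd : Option D → TName D
  | FwdBot : TName D

/-- The finite tape-controller specification `ET`, with read channel `cr`,
write channel `cw`, move channel `cm`, and a queue interface on channels
`ci` (insert) and `co` (remove). -/
noncomputable def tapeCtrlSpec (C D B : Type) [Fintype D] (ci co cr cw cm : C) :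
    TName D → Option (PExp C (Sym D) B (TName D))
  | .H d => some <| .alt (.alt (.alt (.alt
      (.pref (some (.send cr (.dat d))) (.name (.H d)))
      (sumList (allOf (Option D)) fun e =>
        .pref (some (.recv cw (.dat e))) (.name (.H e))))
      (.pref (some (.recv cm .mvL)) (.name (.HL d))))
      (.pref (some (.recv cm .mvR)) (.name (.HR d))))
      .emp
  | .HL d => some <| .pref (some (.send ci (.dat d)))
      (.alt (sumList (allOf (Option D)) fun e =>
          .pref (some (.recv co (.dat e))) (.name (.H e)))
        (.pref (some (.recv co .bot))
          (.pref (some (.send ci .dollar))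
            (.pref (some (.send ci .bot)) (.name .Back)))))
  | .Back => some <| .alt
      (sumList (allOf (Option D)) fun d =>
        .pref (some (.recv co (.dat d)))
          (.pref (some (.send ci (.dat d))) (.name .Back)))
      (.pref (some (.recv co .dollar)) (.name (.H none)))
  | .HR d => some <| .pref (some (.send ci .dollar))
      (.pref (some (.send ci (.dat d)))
        (.alt (sumList (allOf (Option D)) fun e =>
            .pref (some (.recv co (.dat e))) (.name (.Fwd e)))
          (.pref (some (.recv co .bot)) (.name .FwdBot))))
  | .Fwd d => some <| .alt (.alt
      (sumList (allOf (Option D)) fun e =>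
        .pref (some (.recv co (.dat e)))
          (.pref (some (.send ci (.dat d))) (.name (.Fwd e))))
      (.pref (some (.recv co .bot))
        (.pref (some (.send ci (.dat d))) (.name .FwdBot))))
      (.pref (some (.recv co .dollar)) (.name (.H d)))
  | .FwdBot => some <| .alt
      (sumList (allOf (Option D)) fun e =>
        .pref (some (.recv co (.dat e)))
          (.pref (some (.send ci .bot)) (.name (.Fwd e))))
      (.pref (some (.recv co .dollar))
        (.pref (some (.send ci .bot)) (.name (.H none))))

/-- The infinite tape specification `E∞T`: one name for every tape instance,
with read channel `cr`, write channel `cw` and move channel `cm`. -/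
noncomputable def infTapeSpec (C B D : Type) [Fintype D] (cr cw cm : C) :
    Tape D → Option (PExp C (Sym D) B (Tape D)) := fun t =>
  some <| .alt (.alt (.alt (.alt
    (.pref (some (.send cr (.dat t.head))) (.name t))
    (sumList (allOf (Option D)) fun e =>
      .pref (some (.recv cw (.dat e))) (.name ⟨t.left, e, t.right⟩)))
    (.pref (some (.recv cm .mvL)) (.name (t.writeMove t.head .L))))
    (.pref (some (.recv cm .mvR)) (.name (t.writeMove t.head .R))))
    .emp

/-- The finite-control specification `Efc` of an RTM `M`:
`C_{s,d} ≝ Σ_{(s,d,a,e,Mv,t) ∈ →} a.w!e.m!Mv.Σ_{f∈D□} r?f.C_{t,f}`,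
with an additional summand `1` iff `s` is a final state of `M`. -/
noncomputable def fcSpec {C D B : Type} [Fintype D] [Fintype B]
    (M : RTM B D) (cr cw cm : C) :
    M.Q × Option D → Option (PExp C (Sym D) B (M.Q × Option D)) := fun sd =>
  let base : PExp C (Sym D) B (M.Q × Option D) :=
    bigAlt ((((Set.toFinite {x : Option B × Option D × Move × M.Q |
        M.trans sd.1 sd.2 x.1 x.2.1 x.2.2.1 x.2.2.2}).toFinset).toList).map fun x =>
      .pref (Option.map CAct.base x.1)
        (.pref (some (.send cw (.dat x.2.1)))
          (.pref (some (.send cm (movSym x.2.2.1)))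
            (sumList (allOf (Option D)) fun f =>
              .pref (some (.recv cr (.dat f))) (.name (x.2.2.2, f))))))
  haveI := Classical.propDecidable (sd.1 ∈ M.final)
  some (if sd.1 ∈ M.final then .alt base .emp else base)

end RTMPaper

namespace RTMPaper

/-! ### Auxiliary development for the Bergstra–Klop queue theorem -/

section BKQueueProof

variable {C D B : Type}

/-- Abstract shapes of reachable states of the Bergstra–Klop queue. -/
inductive Sh (D : Type) : Type
  | leaf : Sh D
  | consD : Sh D → Option D → Sh D
  | consS : Sh D → Sh D → Sh D

/-- Channel rotation for the left (inner) component. -/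
def rotL (w : C × C × C) : C × C × C := (w.1, w.2.2, w.2.1)

/-- Channel rotation for the right (outer) component. -/
def rotR (w : C × C × C) : C × C × C := (w.2.2, w.2.1, w.1)

def GoodW (w : C × C × C) : Prop := w.1 ≠ w.2.1 ∧ w.1 ≠ w.2.2 ∧ w.2.1 ≠ w.2.2

lemma GoodW.rotL {w : C × C × C} (h : GoodW w) : GoodW (rotL w) :=
  ⟨h.2.1, h.1, fun e => h.2.2 e.symm⟩

lemma GoodW.rotR {w : C × C × C} (h : GoodW w) : GoodW (rotR w) :=
  ⟨Ne.symm h.2.2, Ne.symm h.2.1, Ne.symm h.1⟩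

/-- Concretisation of a shape as a process expression. -/
def concE (B : Type) : Sh D → (C × C × C) → PExp C (Option D) B (C × C × C)
  | .leaf, w => .name w
  | .consD L d, w => .par {w.2.2} (concE B L (rotL w))
      (.alt .emp (.pref (some (.send w.2.1 d)) (.name (rotR w))))
  | .consS L u, w => .par {w.2.2} (concE B L (rotL w)) (concE B u (rotR w))

/-- Queue contents of a shape (head = newest). -/
def contS : Sh D → List (Option D)
  | .leaf => []
  | .consD L d => contS L ++ [d]
  | .consS L u => contS L ++ contS u

/-- Receive a datum (inserted at the innermost position). -/
def recvT : Sh D → Option D → Sh D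
  | .leaf, d => .consD .leaf d
  | .consD L e, d => .consD (recvT L d) e
  | .consS L u, d => .consS (recvT L d) u

/-- The datum ready for output, if any. -/
def outOK : Sh D → Option (Option D)
  | .leaf => none
  | .consD _ d => some d
  | .consS _ u => outOK u

/-- Emit the output datum. -/
def sendT : Sh D → Sh D
  | .leaf => .leaf
  | .consD L _ => .consS L .leaf
  | .consS L u => .consS L (sendT u)

/-- Abstract internal (τ) steps between shapes. -/
inductive TStep : Sh D → Sh D → Prop
  | here {L u : Sh D} {d : Option D} : outOK L = some d →
      TStep (.consS L u) (.consS (sendT L) (recvT u d))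
  | leftD {L L' : Sh D} {d : Option D} : TStep L L' → TStep (.consD L d) (.consD L' d)
  | left {L L' u : Sh D} : TStep L L' → TStep (.consS L u) (.consS L' u)
  | right {L u u' : Sh D} : TStep u u' → TStep (.consS L u) (.consS L u')

lemma cont_recvT (t : Sh D) (d : Option D) : contS (recvT t d) = d :: contS t := by
  induction t with
  | leaf => rfl
  | consD L e ih => simp [recvT, contS, ih]
  | consS L u ih => simp [recvT, contS, ih]

lemma cont_sendT {t : Sh D} {d : Option D} (h : outOK t = some d) :
    contS t = contS (sendT t) ++ [d] := by
  induction t with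
  | leaf => simp [outOK] at h
  | consD L e ih => simp [outOK] at h; simp [sendT, contS, h]
  | consS L u ihL ihu =>
      simp only [outOK] at h
      simp [sendT, contS, ihu h]

lemma cont_tstep {t t' : Sh D} (h : TStep t t') : contS t' = contS t := by
  induction h with
  | here hL => simp [contS, cont_recvT, cont_sendT hL, List.append_assoc]
  | leftD _ ih => simp [contS, ih]
  | left _ ih => simp [contS, ih]
  | right _ ih => simp [contS, ih]

lemma cont_rtg {t t' : Sh D} (h : Relation.ReflTransGen TStep t t') :
    contS t' = contS t := by
  induction h with
  | refl => rfl
  | tail _ h2 ih => rw [cont_tstep h2, ih]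

/-! #### Steps of finite sums -/

lemma step_bigAlt_iff {V N : Type} {E : N → Option (PExp C V B N)}
    {l : List (PExp C V B N)} {a : Option (CAct C V B)} {p' : PExp C V B N} :
    Step E (bigAlt l) a p' ↔ ∃ q ∈ l, Step E q a p' := by
  induction l with
  | nil =>
      constructor
      · intro h; exact absurd h (by intro h; cases h)
      · rintro ⟨q, hq, -⟩; simp at hq
  | cons x xs ih =>
      constructor
      · intro h
        cases h with
        | altL h => exact ⟨x, by simp, h⟩
        | altR h => obtain ⟨q, hq, hs⟩ := ih.mp h; exact ⟨q, by simp [hq], hs⟩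
      · rintro ⟨q, hq, hs⟩
        rcases List.mem_cons.mp hq with rfl | hq
        · exact Step.altL hs
        · exact Step.altR (ih.mpr ⟨q, hq, hs⟩)

lemma step_sumList_iff {V N ι : Type} {E : N → Option (PExp C V B N)}
    {l : List ι} {f : ι → PExp C V B N} {a : Option (CAct C V B)} {p' : PExp C V B N} :
    Step E (sumList l f) a p' ↔ ∃ x ∈ l, Step E (f x) a p' := by
  simp only [sumList, step_bigAlt_iff, List.mem_map]
  constructor
  · rintro ⟨q, ⟨x, hx, rfl⟩, hs⟩; exact ⟨x, hx, hs⟩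
  · rintro ⟨x, hx, hs⟩; exact ⟨f x, ⟨x, hx, rfl⟩, hs⟩

/-! #### Soundness of the abstract steps -/

variable {al : List (Option D)}

lemma stepRecv (hal : ∀ x : Option D, x ∈ al) (d : Option D) :
    ∀ (t : Sh D) (w : C × C × C), GoodW w →
    Step (bkQueueSpec C B (Option D) al) (concE B t w)
      (some (.recv w.1 d)) (concE B (recvT t d) w) := by
  intro t
  induction t with
  | leaf =>
      intro w hG
      refine Step.name rfl (Step.altL ?_)
      refine step_sumList_iff.mpr ⟨d, hal d, ?_⟩
      exact Step.pref
  | consD L e ih =>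
      intro w hG
      exact Step.parL (ih (rotL w) hG.rotL) (by simp [IsComm]; exact hG.2.1)
  | consS L u ih _ =>
      intro w hG
      exact Step.parL (ih (rotL w) hG.rotL) (by simp [IsComm]; exact hG.2.1)

lemma stepSend :
    ∀ (t : Sh D) (w : C × C × C), GoodW w → ∀ d : Option D, outOK t = some d →
    Step (bkQueueSpec C B (Option D) al) (concE B t w)
      (some (.send w.2.1 d)) (concE B (sendT t) w) := by
  intro t
  induction t with
  | leaf => intro w hG d h; simp [outOK] at h
  | consD L e ih =>
      intro w hG d h
      simp only [outOK, Option.some.injEq] at h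
      subst h
      exact Step.parR (Step.altR Step.pref) (by simp [IsComm]; exact hG.2.2)
  | consS L u _ ihu =>
      intro w hG d h
      simp only [outOK] at h
      exact Step.parR (ihu (rotR w) hG.rotR d h) (by simp [IsComm]; exact hG.2.2)

lemma stepTau (hal : ∀ x : Option D, x ∈ al) {t t' : Sh D} (h : TStep t t') :
    ∀ w : C × C × C, GoodW w →
    Step (bkQueueSpec C B (Option D) al) (concE B t w) none (concE B t' w) := by
  induction h with
  | @here L u d hL =>
      intro w hG
      exact Step.syncSR (c := w.2.2) (by simp)
        (stepSend L (rotL w) hG.rotL d hL)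
        (stepRecv hal d u (rotR w) hG.rotR)
  | leftD _ ih =>
      intro w hG
      exact Step.parL (ih (rotL w) hG.rotL) (by simp [IsComm])
  | left _ ih =>
      intro w hG
      exact Step.parL (ih (rotL w) hG.rotL) (by simp [IsComm])
  | right _ ih =>
      intro w hG
      exact Step.parR (ih (rotR w) hG.rotR) (by simp [IsComm])

lemma term_conc : ∀ (t : Sh D) (w : C × C × C),
    Term (bkQueueSpec C B (Option D) al) (concE B t w) := by
  intro t
  induction t with
  | leaf => intro w; exact Term.name rfl (Term.altR Term.emp)
  | consD L e ih => intro w; exact Term.par (ih (rotL w)) (Term.altL Term.emp)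
  | consS L u ihL ihu => intro w; exact Term.par (ihL (rotL w)) (ihu (rotR w))

/-! #### Completeness: classification of steps from a concrete shape -/

lemma classify :
    ∀ (t : Sh D) (w : C × C × C), GoodW w →
    ∀ (a : Option (CAct C (Option D) B)) (s' : PExp C (Option D) B (C × C × C)),
    Step (bkQueueSpec C B (Option D) al) (concE B t w) a s' →
    (∃ d, a = some (.recv w.1 d) ∧ s' = concE B (recvT t d) w) ∨
    (∃ d, outOK t = some d ∧ a = some (.send w.2.1 d) ∧ s' = concE B (sendT t) w) ∨
    (a = none ∧ ∃ t', TStep t t' ∧ s' = concE B t' w) := by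
  intro t
  induction t with
  | leaf =>
      intro w hG a s' h
      cases h with
      | name hE hs =>
          rw [bkQueueSpec] at hE
          obtain rfl := Option.some.inj hE
          cases hs with
          | altL h =>
              obtain ⟨d, -, hd⟩ := step_sumList_iff.mp h
              cases hd
              exact Or.inl ⟨d, rfl, rfl⟩
          | altR h => cases h
  | consD L e ihL =>
      intro w hG a s' h
      cases h with
      | parL hstep hcomm =>
          rcases ihL (rotL w) hG.rotL _ _ hstep with ⟨d, rfl, rfl⟩ | ⟨d, _, rfl, _⟩ | ⟨rfl, L', hT, rfl⟩
          · exact Or.inl ⟨d, rfl, rfl⟩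
          · exact absurd (by simp [IsComm, rotL] : IsComm {w.2.2} (some (CAct.send (B := B) (V := Option D) (rotL w).2.1 d))) hcomm
          · exact Or.inr (Or.inr ⟨rfl, .consD L' e, TStep.leftD hT, rfl⟩)
      | parR hstep hcomm =>
          cases hstep with
          | altL h => cases h
          | altR h =>
              cases h
              exact Or.inr (Or.inl ⟨e, rfl, rfl, rfl⟩)
      | syncSR hc hl hr =>
          cases hr with
          | altL h => cases h
          | altR h => cases h
      | syncRS hc hl hr =>
          simp only [Set.mem_singleton_iff] at hc
          rcases ihL (rotL w) hG.rotL _ _ hl with ⟨d, he, -⟩ | ⟨d, -, he, -⟩ | ⟨he, -⟩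
          · simp only [rotL, Option.some.injEq, CAct.recv.injEq] at he
            exact absurd (he.1.symm.trans hc) hG.2.1
          · simp [rotL] at he
          · simp at he
  | consS L u ihL ihu =>
      intro w hG a s' h
      cases h with
      | parL hstep hcomm =>
          rcases ihL (rotL w) hG.rotL _ _ hstep with ⟨d, rfl, rfl⟩ | ⟨d, _, rfl, _⟩ | ⟨rfl, L', hT, rfl⟩
          · exact Or.inl ⟨d, rfl, rfl⟩
          · exact absurd (by simp [IsComm, rotL] : IsComm {w.2.2} (some (CAct.send (B := B) (V := Option D) (rotL w).2.1 d))) hcomm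
          · exact Or.inr (Or.inr ⟨rfl, .consS L' u, TStep.left hT, rfl⟩)
      | parR hstep hcomm =>
          rcases ihu (rotR w) hG.rotR _ _ hstep with ⟨d, rfl, rfl⟩ | ⟨d, hout, rfl, rfl⟩ | ⟨rfl, u', hT, rfl⟩
          · exact absurd (by simp [IsComm, rotR] : IsComm {w.2.2} (some (CAct.recv (B := B) (V := Option D) (rotR w).1 d))) hcomm
          · exact Or.inr (Or.inl ⟨d, hout, rfl, rfl⟩)
          · exact Or.inr (Or.inr ⟨rfl, .consS L u', TStep.right hT, rfl⟩)
      | syncSR hc hl hr =>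
          simp only [Set.mem_singleton_iff] at hc
          subst hc
          rcases ihL (rotL w) hG.rotL _ _ hl with ⟨d, he, -⟩ | ⟨d, hout, he, rfl⟩ | ⟨he, -⟩
          · exact absurd he (by simp)
          · rcases ihu (rotR w) hG.rotR _ _ hr with ⟨d', he', rfl⟩ | ⟨d', -, he', -⟩ | ⟨he', -⟩
            · simp only [rotL, Option.some.injEq, CAct.send.injEq] at he
              simp only [rotR, Option.some.injEq, CAct.recv.injEq] at he'
              obtain ⟨-, rfl⟩ := he
              obtain ⟨-, rfl⟩ := he'
              exact Or.inr (Or.inr ⟨rfl, .consS (sendT L) (recvT u _), TStep.here hout, rfl⟩)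
            · exact absurd he' (by simp)
            · exact absurd he' (by simp)
          · exact absurd he (by simp)
      | syncRS hc hl hr =>
          simp only [Set.mem_singleton_iff] at hc
          subst hc
          rcases ihL (rotL w) hG.rotL _ _ hl with ⟨d, he, -⟩ | ⟨d, -, he, -⟩ | ⟨he, -⟩
          · have : w.1 = w.2.2 := by simp [rotL] at he; exact he.1.symm
            exact absurd this hG.2.1
          · exact absurd he (by simp [rotL])
          · exact absurd he (by simp)

/-! #### Termination of τ-steps -/

def flatS : Sh D → List Bool
  | .leaf => [true]
  | .consD L _ => flatS L ++ [false]
  | .consS L u => flatS L ++ flatS u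

def ncB (l : List Bool) : ℕ := l.count true
def dcB (l : List Bool) : ℕ := l.count false

def phiB : List Bool → ℕ
  | [] => 0
  | true :: r => phiB r
  | false :: r => ncB r + 2 * phiB r

lemma ncB_append (l r : List Bool) : ncB (l ++ r) = ncB l + ncB r := List.count_append ..
lemma dcB_append (l r : List Bool) : dcB (l ++ r) = dcB l + dcB r := List.count_append ..

lemma phiB_append (l r : List Bool) :
    phiB (l ++ r) + ncB r = phiB l + 2 ^ dcB l * (phiB r + ncB r) := by
  induction l with
  | nil => simp [phiB, ncB, dcB]
  | cons x l ih =>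
      cases x with
      | true =>
          simp only [List.cons_append, phiB, ncB, dcB, List.count_cons] at *
          simpa using ih
      | false =>
          have h1 : phiB ((false :: l) ++ r) = ncB (l ++ r) + 2 * phiB (l ++ r) := by
            rw [List.cons_append]; rfl
          have h2 : phiB (false :: l) = ncB l + 2 * phiB l := rfl
          have h3 : dcB (false :: l) = dcB l + 1 := by simp [dcB, List.count_cons]
          have h4 := ncB_append l r
          have h5 : (2 : ℕ) ^ (dcB l + 1) * (phiB r + ncB r)
              = 2 * (2 ^ dcB l * (phiB r + ncB r)) := by ring
          rw [h1, h2, h3, h5]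
          omega

lemma flat_recvT (t : Sh D) (d : Option D) :
    ∃ r, flatS t = true :: r ∧ flatS (recvT t d) = true :: false :: r := by
  induction t with
  | leaf => exact ⟨[], rfl, rfl⟩
  | consD L e ih =>
      obtain ⟨r, h1, h2⟩ := ih
      exact ⟨r ++ [false], by simp [flatS, h1], by simp [flatS, recvT, h2]⟩
  | consS L u ihL _ =>
      obtain ⟨r, h1, h2⟩ := ihL
      exact ⟨r ++ flatS u, by simp [flatS, h1], by simp [flatS, recvT, h2]⟩

lemma flat_sendT {t : Sh D} {d : Option D} (h : outOK t = some d) :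
    ∃ g, flatS t = g ++ [false] ∧ flatS (sendT t) = g ++ [true] := by
  induction t with
  | leaf => simp [outOK] at h
  | consD L e _ => exact ⟨flatS L, rfl, rfl⟩
  | consS L u _ ihu =>
      simp only [outOK] at h
      obtain ⟨g, h1, h2⟩ := ihu h
      exact ⟨flatS L ++ g, by simp [flatS, h1], by simp [flatS, sendT, h2]⟩

lemma measure_main {t t' : Sh D} (h : TStep t t') :
    dcB (flatS t') = dcB (flatS t) ∧ ncB (flatS t') = ncB (flatS t) + 1 ∧
      phiB (flatS t') + 1 ≤ phiB (flatS t) := by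
  induction h with
  | @here L u d hout =>
      obtain ⟨g, hL1, hL2⟩ := flat_sendT hout
      obtain ⟨r, hu1, hu2⟩ := flat_recvT u d
      have e0 : flatS (Sh.consS L u) = g ++ (false :: true :: r) := by
        simp [flatS, hL1, hu1]
      have e0' : flatS (Sh.consS (sendT L) (recvT u d)) = g ++ (true :: true :: false :: r) := by
        simp [flatS, hL2, hu2]
      rw [e0, e0']
      have e1 := phiB_append g (false :: true :: r)
      have e2 := phiB_append g (true :: true :: false :: r)
      have hkey : phiB (true :: true :: false :: r) + ncB (true :: true :: false :: r)
          = phiB (false :: true :: r) + ncB (false :: true :: r) := by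
        simp [phiB, ncB, List.count_cons]; ring
      rw [hkey] at e2
      have c1 : ncB (false :: true :: r) = ncB r + 1 := by
        simp [ncB, List.count_cons]
      have c2 : ncB (true :: true :: false :: r) = ncB r + 2 := by
        simp [ncB, List.count_cons]
      refine ⟨?_, ?_, ?_⟩
      · simp [dcB_append, dcB, List.count_cons]
      · simp [ncB_append, ncB, List.count_cons]; ring
      · omega
  | @leftD L L' d _ ih =>
      have hphi : ∀ x : Sh D, phiB (flatS (Sh.consD x d)) = phiB (flatS x) := by
        intro x
        have := phiB_append (flatS x) [false]
        simp [phiB, ncB, dcB] at this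
        simp [flatS, this]
      refine ⟨?_, ?_, ?_⟩
      · simp [flatS, dcB_append, ih.1]
      · simp [flatS, ncB_append, ih.2.1]; omega
      · rw [hphi, hphi]; exact ih.2.2
  | @left L L' u _ ih =>
      have e1 := phiB_append (flatS L) (flatS u)
      have e2 := phiB_append (flatS L') (flatS u)
      rw [ih.1] at e2
      refine ⟨?_, ?_, ?_⟩
      · simp [flatS, dcB_append, ih.1]
      · simp [flatS, ncB_append, ih.2.1]; omega
      · simp only [flatS]; omega
  | @right L u u' _ ih =>
      have e1 := phiB_append (flatS L) (flatS u)
      have e2 := phiB_append (flatS L) (flatS u')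
      have hmono : 2 ^ dcB (flatS L) * (phiB (flatS u') + ncB (flatS u'))
          ≤ 2 ^ dcB (flatS L) * (phiB (flatS u) + ncB (flatS u)) :=
        Nat.mul_le_mul_left _ (by omega)
      refine ⟨?_, ?_, ?_⟩
      · simp [flatS, dcB_append, ih.1]
      · simp [flatS, ncB_append, ih.2.1]; omega
      · simp only [flatS]; omega

lemma no_infinite_tau (f : ℕ → Sh D) (h : ∀ i, TStep (f i) (f (i + 1))) : False := by
  have key : ∀ i, phiB (flatS (f i)) + i ≤ phiB (flatS (f 0)) := by
    intro i
    induction i with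
    | zero => omega
    | succ n ih =>
        have := (measure_main (h n)).2.2
        omega
  have := key (phiB (flatS (f 0)) + 1)
  omega

/-! #### Liveness: the next output datum can always be brought to the surface -/

lemma rtg_left {L L' : Sh D} (u : Sh D) (h : Relation.ReflTransGen TStep L L') :
    Relation.ReflTransGen TStep (Sh.consS L u) (Sh.consS L' u) :=
  Relation.ReflTransGen.lift (fun x => Sh.consS x u) (fun _ _ hs => TStep.left hs) _ _ h

lemma rtg_right (L : Sh D) {u u' : Sh D} (h : Relation.ReflTransGen TStep u u') :
    Relation.ReflTransGen TStep (Sh.consS L u) (Sh.consS L u') :=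
  Relation.ReflTransGen.lift (fun x => Sh.consS L x) (fun _ _ hs => TStep.right hs) _ _ h

lemma emptyRecv : ∀ u : Sh D, contS u = [] → ∀ d : Option D,
    ∃ u', Relation.ReflTransGen TStep (recvT u d) u' ∧ outOK u' = some d := by
  intro u
  induction u with
  | leaf => exact fun _ d => ⟨.consD .leaf d, .refl, rfl⟩
  | consD L e _ => intro h; simp [contS] at h
  | consS L u ihL ihu =>
      intro h d
      simp only [contS, List.append_eq_nil_iff] at h
      obtain ⟨L'', hL, houtL⟩ := ihL h.1 d
      obtain ⟨u'', hu, houtu⟩ := ihu h.2 d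
      refine ⟨.consS (sendT L'') u'', ?_, houtu⟩
      exact (rtg_left u hL).trans
        (Relation.ReflTransGen.head (TStep.here houtL) (rtg_right _ hu))

lemma live : ∀ t : Sh D, ∀ (σ : List (Option D)) (d : Option D), contS t = σ ++ [d] →
    ∃ t', Relation.ReflTransGen TStep t t' ∧ outOK t' = some d := by
  intro t
  induction t with
  | leaf => intro σ d h; simp [contS] at h
  | consD L e _ =>
      intro σ d h
      have : some e = some d := by
        have := congrArg List.getLast? h
        simpa [contS, List.getLast?_concat] using this
      obtain rfl := Option.some.inj this
      exact ⟨.consD L e, .refl, rfl⟩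
  | consS L u ihL ihu =>
      intro σ d h
      rcases eq_or_ne (contS u) [] with hu | hu
      · have hL : contS L = σ ++ [d] := by simpa [contS, hu] using h
        obtain ⟨L'', hrL, houtL⟩ := ihL σ d hL
        obtain ⟨u'', hru, houtu⟩ := emptyRecv u hu d
        refine ⟨.consS (sendT L'') u'', ?_, houtu⟩
        exact (rtg_left u hrL).trans
          (Relation.ReflTransGen.head (TStep.here houtL) (rtg_right _ hru))
      · have hlast : (contS u).getLast? = some d := by
          have h1 : (contS L ++ contS u).getLast? = some d := by
            rw [show contS L ++ contS u = contS (Sh.consS L u) from rfl, h]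
            exact List.getLast?_concat
          rwa [List.getLast?_append_of_ne_nil _ hu] at h1
        obtain ⟨σ', hσ'⟩ := List.getLast?_eq_some_iff.mp hlast
        obtain ⟨u'', hru, houtu⟩ := ihu σ' d hσ'
        exact ⟨.consS L u'', rtg_right L hru, houtu⟩

/-! #### The infinite queue specification -/

section InfQ

variable {alq : List (Option D)} {ci co : C}

lemma stepQrecv (hal : ∀ x : Option D, x ∈ alq) (σ : List (Option D)) (d : Option D) :
    Step (infQueueSpec C B (Option D) alq ci co) (.name σ)
      (some (.recv ci d)) (.name (d :: σ)) := by
  cases hσ : σ.getLast? with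
  | none =>
      obtain rfl : σ = [] := List.getLast?_eq_none_iff.mp hσ
      exact Step.name rfl (Step.altL (step_sumList_iff.mpr ⟨d, hal d, Step.pref⟩))
  | some e =>
      refine Step.name (p := .alt (.alt (.pref (some (.send co e)) (.name σ.dropLast))
          (sumList alq fun e' => .pref (some (.recv ci e')) (.name (e' :: σ)))) .emp)
        (by simp only [infQueueSpec, hσ]) ?_
      exact Step.altL (Step.altR (step_sumList_iff.mpr ⟨d, hal d, Step.pref⟩))

lemma stepQsend (σ : List (Option D)) (d : Option D) (h : σ.getLast? = some d) :
    Step (infQueueSpec C B (Option D) alq ci co) (.name σ)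
      (some (.send co d)) (.name σ.dropLast) := by
  refine Step.name (p := .alt (.alt (.pref (some (.send co d)) (.name σ.dropLast))
      (sumList alq fun e' => .pref (some (.recv ci e')) (.name (e' :: σ)))) .emp)
    (by simp only [infQueueSpec, h]) ?_
  exact Step.altL (Step.altL Step.pref)

lemma classifyQ {σ : List (Option D)} {a : Option (CAct C (Option D) B)}
    {s' : PExp C (Option D) B (List (Option D))}
    (h : Step (infQueueSpec C B (Option D) alq ci co) (.name σ) a s') :
    (∃ d, a = some (.recv ci d) ∧ s' = .name (d :: σ)) ∨
    (∃ d, σ.getLast? = some d ∧ a = some (.send co d) ∧ s' = .name σ.dropLast) := by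
  cases h with
  | name hE hs =>
      cases hσ : σ.getLast? with
      | none =>
          obtain rfl : σ = [] := List.getLast?_eq_none_iff.mp hσ
          have he : infQueueSpec C B (Option D) alq ci co [] =
              some (.alt (sumList alq fun d =>
                .pref (some (.recv ci d)) (.name [d])) .emp) := rfl
          rw [he] at hE
          obtain rfl := Option.some.inj hE
          cases hs with
          | altL h =>
              obtain ⟨d, -, hd⟩ := step_sumList_iff.mp h
              cases hd
              exact Or.inl ⟨d, rfl, rfl⟩
          | altR h => cases h
      | some e =>
          have he : infQueueSpec C B (Option D) alq ci co σ =
              some (.alt (.alt (.pref (some (.send co e)) (.name σ.dropLast))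
                (sumList alq fun e' => .pref (some (.recv ci e')) (.name (e' :: σ)))) .emp) := by
            simp only [infQueueSpec, hσ]
          rw [he] at hE
          obtain rfl := Option.some.inj hE
          cases hs with
          | altL h =>
              cases h with
              | altL h =>
                  cases h
                  exact Or.inr ⟨e, rfl, rfl, rfl⟩
              | altR h =>
                  obtain ⟨d, -, hd⟩ := step_sumList_iff.mp h
                  cases hd
                  exact Or.inl ⟨d, rfl, rfl⟩
          | altR h => cases h

lemma termQ (σ : List (Option D)) :
    Term (infQueueSpec C B (Option D) alq ci co) (.name σ) := by
  cases hσ : σ.getLast? with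
  | none =>
      obtain rfl : σ = [] := List.getLast?_eq_none_iff.mp hσ
      exact Term.name rfl (Term.altR Term.emp)
  | some e =>
      exact Term.name (p := .alt (.alt (.pref (some (.send co e)) (.name σ.dropLast))
          (sumList alq fun e' => .pref (some (.recv ci e')) (.name (e' :: σ)))) .emp)
        (by simp only [infQueueSpec, hσ]) (Term.altR Term.emp)

end InfQ

lemma mem_allOf {ι : Type} [Fintype ι] (x : ι) : x ∈ allOf ι := by
  simp [allOf]

/-! #### Lifting abstract τ-sequences to the process LTS -/

lemma tau_lift {alq : List (Option D)} (hal : ∀ x : Option D, x ∈ alq)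
    {w : C × C × C} (hG : GoodW w) {p0 : PExp C (Option D) B (C × C × C)}
    (s : (pLTS (bkQueueSpec C B (Option D) alq) p0).State) {t t' : Sh D}
    (hs : s.1 = concE B t w) (h : Relation.ReflTransGen TStep t t') :
    ∃ s' : (pLTS (bkQueueSpec C B (Option D) alq) p0).State,
      (pLTS (bkQueueSpec C B (Option D) alq) p0).tauReach s s' ∧
        s'.1 = concE B t' w := by
  induction h with
  | refl => exact ⟨s, .refl, hs⟩
  | @tail tm tf h1 h2 ih =>
      obtain ⟨s'', r, hs''⟩ := ih
      have hstep : Step (bkQueueSpec C B (Option D) alq) s''.1 none (concE B tf w) := by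
        rw [hs'']; exact stepTau hal h2 w hG
      exact ⟨⟨concE B tf w, Relation.ReflTransGen.tail s''.2 ⟨none, hstep⟩⟩,
        r.tail hstep, rfl⟩

end BKQueueProof

/-- The infinite queue specification and the finite
Bergstra–Klop queue specification define the same behaviour up to
divergence-preserving branching bisimilarity:
`T_{E∞Q}(Q_ε) ≈Δb T_{EQ}(Q^{io}_l)`. -/
theorem infinite_queue_dpbbisim_bk_queue
    {C D B : Type} [Fintype D] (ci co cl : C)
    (hio : ci ≠ co) (hil : ci ≠ cl) (hol : co ≠ cl) :
    DPBranchingBisimilar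
      (pLTS (infQueueSpec C B (Option D) (allOf (Option D)) ci co)
        (.name ([] : List (Option D))))
      (pLTS (bkQueueSpec C B (Option D) (allOf (Option D)))
        (.name (ci, co, cl))) := by
  have hG : GoodW ((ci, co, cl) : C × C × C) := ⟨hio, hil, hol⟩
  have hal : ∀ x : Option D, x ∈ allOf (Option D) := mem_allOf
  set E1 := infQueueSpec C B (Option D) (allOf (Option D)) ci co with hE1
  set E2 := bkQueueSpec C B (Option D) (allOf (Option D)) with hE2
  refine ⟨fun q s => ∃ t : Sh D, q.1 = PExp.name (contS t) ∧
      s.1 = concE B t (ci, co, cl), ⟨?_, ?_, ?_, ?_⟩, ⟨?_, ?_⟩, ⟨Sh.leaf, rfl, rfl⟩⟩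
  · -- fwd
    rintro s₁ s₂ a s₁' ⟨t, h1, h2⟩ h
    have h' : Step E1 (.name (contS t)) a s₁'.1 := by rw [← h1]; exact h
    rcases classifyQ h' with ⟨d, rfl, h3⟩ | ⟨d, hl, rfl, h3⟩
    · -- input
      have hstep : Step E2 s₂.1 (some (.recv ci d)) (concE B (recvT t d) (ci, co, cl)) := by
        rw [h2]; exact stepRecv hal d t _ hG
      refine ⟨s₂, ⟨concE B (recvT t d) _, Relation.ReflTransGen.tail s₂.2 ⟨_, hstep⟩⟩,
        .refl, Or.inl hstep, ⟨t, h1, h2⟩, ⟨recvT t d, ?_, rfl⟩⟩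
      rw [h3, cont_recvT]
    · -- output
      obtain ⟨σ', hσ'⟩ := List.getLast?_eq_some_iff.mp hl
      obtain ⟨t'', hrt, hout⟩ := live t σ' d hσ'
      obtain ⟨s₂'', hreach, hs''⟩ := tau_lift hal hG s₂ h2 hrt
      have hco : contS t'' = contS t := cont_rtg hrt
      have hstep : Step E2 s₂''.1 (some (.send co d)) (concE B (sendT t'') (ci, co, cl)) := by
        rw [hs'']; exact stepSend t'' _ hG d hout
      refine ⟨s₂'', ⟨concE B (sendT t'') _, Relation.ReflTransGen.tail s₂''.2 ⟨_, hstep⟩⟩,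
        hreach, Or.inl hstep, ⟨t'', ?_, hs''⟩, ⟨sendT t'', ?_, rfl⟩⟩
      · rw [h1, hco]
      · rw [h3, ← hco, cont_sendT hout, List.dropLast_concat]
  · -- bwd
    rintro s₁ s₂ a s₂' ⟨t, h1, h2⟩ h
    have h' : Step E2 (concE B t (ci, co, cl)) a s₂'.1 := by rw [← h2]; exact h
    rcases classify t _ hG _ _ h' with ⟨d, rfl, h3⟩ | ⟨d, hout, rfl, h3⟩ | ⟨rfl, t', hT, h3⟩
    · -- input
      have hstep : Step E1 s₁.1 (some (.recv ci d)) (.name (d :: contS t)) := by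
        rw [h1]; exact stepQrecv hal _ d
      refine ⟨s₁, ⟨.name (d :: contS t), Relation.ReflTransGen.tail s₁.2 ⟨_, hstep⟩⟩,
        .refl, Or.inl hstep, ⟨t, h1, h2⟩, ⟨recvT t d, ?_, h3⟩⟩
      exact congrArg PExp.name (by rw [cont_recvT])
    · -- output
      have hl : (contS t).getLast? = some d := by
        rw [cont_sendT hout]; exact List.getLast?_concat
      have hstep : Step E1 s₁.1 (some (.send co d)) (.name (contS t).dropLast) := by
        rw [h1]; exact stepQsend _ d hl
      refine ⟨s₁, ⟨.name (contS t).dropLast, Relation.ReflTransGen.tail s₁.2 ⟨_, hstep⟩⟩,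
        .refl, Or.inl hstep, ⟨t, h1, h2⟩, ⟨sendT t, ?_, h3⟩⟩
      exact congrArg PExp.name (by rw [cont_sendT hout, List.dropLast_concat])
    · -- internal
      exact ⟨s₁, s₁, .refl, Or.inr ⟨rfl, rfl⟩, ⟨t, h1, h2⟩,
        ⟨t', by rw [h1, cont_tstep hT], h3⟩⟩
  · -- final fwd
    rintro s₁ s₂ ⟨t, h1, h2⟩ _
    refine ⟨s₂, .refl, ⟨t, h1, h2⟩, ?_⟩
    show Term E2 s₂.1
    rw [h2]; exact term_conc t _
  · -- final bwd
    rintro s₁ s₂ ⟨t, h1, h2⟩ _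
    refine ⟨s₁, .refl, ⟨t, h1, h2⟩, ?_⟩
    show Term E1 s₁.1
    rw [h1]; exact termQ _
  · -- divergence 1
    rintro s₂ f hf hRf
    exfalso
    obtain ⟨t, h1, -⟩ := hRf 0
    have h := hf 0
    have h' : Step E1 (.name (contS t)) none (f 1).1 := by rw [← h1]; exact h
    rcases classifyQ h' with ⟨d, hd, -⟩ | ⟨d, -, hd, -⟩ <;> cases hd
  · -- divergence 2
    rintro s₁ f hf hRf
    exfalso
    have step : ∀ (i : ℕ) (t : Sh D), (f i).1 = concE B t (ci, co, cl) →
        ∃ t', TStep t t' ∧ (f (i + 1)).1 = concE B t' (ci, co, cl) := by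
      intro i t ht
      have h := hf i
      have h' : Step E2 (concE B t (ci, co, cl)) none (f (i + 1)).1 := by
        rw [← ht]; exact h
      rcases classify t _ hG _ _ h' with ⟨d, hd, -⟩ | ⟨d, -, hd, -⟩ | ⟨-, t', hT, h3⟩
      · cases hd
      · cases hd
      · exact ⟨t', hT, h3⟩
    obtain ⟨t0, -, h2⟩ := hRf 0
    let g : ∀ i : ℕ, {t : Sh D // (f i).1 = concE B t (ci, co, cl)} := fun i =>
      Nat.rec ⟨t0, h2⟩
        (fun n p => ⟨(step n p.1 p.2).choose, (step n p.1 p.2).choose_spec.2⟩) i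
    exact no_infinite_tau (fun i => (g i).1)
      (fun i => (step i (g i).1 (g i).2).choose_spec.1)

end RTMPaper
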